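/- On L²([0,1]^d): (i) the operators 𝐓²(𝐈 − 𝐏)(𝐓*)² (the covariance operator of the left-integrated pinned Brownian sheet 𝐁^[0]) and (𝐈 − 𝐏)𝐓²(𝐓*)²(𝐈 − 𝐏) (the covariance operator of the centered left-integrated Brownian sheet) have the same nonzero eigenvalues with multiplicities; (ii) likewise, 𝐓*𝐓(𝐈 − 𝐏)𝐓*𝐓 (the covariance operator of the right-integrated pinned Brownian sheet 𝐁^[1]) and (𝐈 − 𝐏)𝐓*𝐓𝐓*𝐓(𝐈 − 𝐏) (the covariance operator of the centered right-integrated Brownian sheet) have the same nonzero eigenvalues with multiplicities. -/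

import Mathlib

open MeasureTheory

noncomputable section

/-- Lebesgue measure on the cube `[0,1]^d`, as a measure on `ℝ^d`. -/
def cubeMeasure (d : ℕ) : Measure (Fin d → ℝ) :=
  Measure.pi fun _ => volume.restrict (Set.Icc (0:ℝ) 1)

/-- `A` and `B` have the same nonzero eigenvalues with multiplicities. -/
def SameNonzeroEigenvalues {H : Type*} [NormedAddCommGroup H] [NormedSpace ℂ H]
    (A B : H →L[ℂ] H) : Prop :=
  ∀ l : ℂ, l ≠ 0 → ∀ m : ℕ, 1 ≤ m →
    Module.rank ℂ (LinearMap.ker (((A - l • 1) ^ m : H →L[ℂ] H) : H →ₗ[ℂ] H)) =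
    Module.rank ℂ (LinearMap.ker (((B - l • 1) ^ m : H →L[ℂ] H) : H →ₗ[ℂ] H))

/- ### Auxiliary abstract lemmas -/

private lemma key_comm {H : Type*} [NormedAddCommGroup H] [NormedSpace ℂ H]
    (A B : H →L[ℂ] H) (l : ℂ) (m : ℕ) :
    ((B * A) - l • 1) ^ m * B = B * ((A * B) - l • 1) ^ m := by
  induction m with
  | zero => simp
  | succ n ih =>
    have h : ((B * A) - l • 1) * B = B * ((A * B) - l • 1) := by
      simp only [sub_mul, mul_sub, smul_mul_assoc, mul_smul_comm, one_mul, mul_one, mul_assoc]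
    rw [pow_succ, pow_succ, mul_assoc, h, ← mul_assoc, ih, mul_assoc]

private lemma rank_ker_le {H : Type*} [NormedAddCommGroup H] [NormedSpace ℂ H]
    (A B : H →L[ℂ] H) {l : ℂ} (hl : l ≠ 0) (m : ℕ) :
    Module.rank ℂ (LinearMap.ker ((((A * B) - l • 1) ^ m : H →L[ℂ] H) : H →ₗ[ℂ] H)) ≤
      Module.rank ℂ (LinearMap.ker ((((B * A) - l • 1) ^ m : H →L[ℂ] H) : H →ₗ[ℂ] H)) := by
  set Y := (A * B) - l • 1 with hYdef
  set X := (B * A) - l • 1 with hXdef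
  have hmem : ∀ x : H, x ∈ LinearMap.ker ((Y ^ m : H →L[ℂ] H) : H →ₗ[ℂ] H) → B x ∈ LinearMap.ker ((X ^ m : H →L[ℂ] H) : H →ₗ[ℂ] H) := by
    intro x hx
    rw [LinearMap.mem_ker, ContinuousLinearMap.coe_coe] at hx ⊢
    have h := congrArg (fun f : H →L[ℂ] H => f x) (key_comm A B l m)
    simp only [ContinuousLinearMap.mul_apply] at h
    rw [h, hx, map_zero]
  let φ : (LinearMap.ker ((Y ^ m : H →L[ℂ] H) : H →ₗ[ℂ] H)) →ₗ[ℂ] (LinearMap.ker ((X ^ m : H →L[ℂ] H) : H →ₗ[ℂ] H)) :=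
    { toFun := fun x => ⟨B x.1, hmem x.1 x.2⟩
      map_add' := fun x y => by ext; simp
      map_smul' := fun c x => by ext; simp }
  have hinj : Function.Injective φ := by
    intro x y hxy
    have hB : B (x.1 - y.1) = 0 := by
      have h : B x.1 = B y.1 := congrArg Subtype.val hxy
      rw [map_sub, h, sub_self]
    have hker : (Y ^ m) (x.1 - y.1) = 0 := by
      have hx := x.2; have hy := y.2
      rw [LinearMap.mem_ker, ContinuousLinearMap.coe_coe] at hx hy
      rw [map_sub, hx, hy, sub_self]
    have hYz : Y (x.1 - y.1) = (-l) • (x.1 - y.1) := by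
      show ((A * B) - l • 1) (x.1 - y.1) = (-l) • (x.1 - y.1)
      simp [ContinuousLinearMap.sub_apply, ContinuousLinearMap.smul_apply,
        ContinuousLinearMap.mul_apply, hB, neg_smul]
    have hpow : ∀ n : ℕ, (Y ^ n) (x.1 - y.1) = ((-l) ^ n) • (x.1 - y.1) := by
      intro n
      induction n with
      | zero => simp
      | succ k ihk =>
        rw [pow_succ, ContinuousLinearMap.mul_apply, hYz, ContinuousLinearMap.map_smul, ihk, smul_smul, ← pow_succ']
    have h0 := hpow m
    rw [hker] at h0
    have hz : x.1 - y.1 = 0 := by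
      rcases smul_eq_zero.mp h0.symm with h | h
      · exact absurd h (pow_ne_zero _ (neg_ne_zero.mpr hl))
      · exact h
    exact Subtype.ext (sub_eq_zero.mp hz)
  exact LinearMap.rank_le_of_injective φ hinj

private lemma sne_mul {H : Type*} [NormedAddCommGroup H] [NormedSpace ℂ H]
    (A B : H →L[ℂ] H) : SameNonzeroEigenvalues (A * B) (B * A) :=
  fun _ hl m _ => le_antisymm (rank_ker_le A B hl m) (rank_ker_le B A hl m)

private lemma sne_trans {H : Type*} [NormedAddCommGroup H] [NormedSpace ℂ H]
    {A B C : H →L[ℂ] H} (h1 : SameNonzeroEigenvalues A B) (h2 : SameNonzeroEigenvalues B C) :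
    SameNonzeroEigenvalues A C :=
  fun l hl m hm => (h1 l hl m hm).trans (h2 l hl m hm)

private lemma sne_symm {H : Type*} [NormedAddCommGroup H] [NormedSpace ℂ H]
    {A B : H →L[ℂ] H} (h : SameNonzeroEigenvalues A B) : SameNonzeroEigenvalues B A :=
  fun l hl m hm => (h l hl m hm).symm

/- ### The reflection map on the cube -/

private def cubeReflect (d : ℕ) : (Fin d → ℝ) → (Fin d → ℝ) := fun x i => 1 - x i

private lemma cubeReflect_involutive (d : ℕ) (x : Fin d → ℝ) :
    cubeReflect d (cubeReflect d x) = x := by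
  funext i; simp [cubeReflect]

private def cubeReflectEquiv (d : ℕ) : (Fin d → ℝ) ≃ᵐ (Fin d → ℝ) where
  toEquiv := ⟨cubeReflect d, cubeReflect d, cubeReflect_involutive d, cubeReflect_involutive d⟩
  measurable_toFun := by
    exact measurable_pi_lambda _ fun i => (measurable_pi_apply i).const_sub 1
  measurable_invFun := by
    exact measurable_pi_lambda _ fun i => (measurable_pi_apply i).const_sub 1

private lemma oneSub_measurePreserving :
    MeasurePreserving (fun t : ℝ => 1 - t)
      (volume.restrict (Set.Icc (0:ℝ) 1)) (volume.restrict (Set.Icc (0:ℝ) 1)) := by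
  have h := (Measure.measurePreserving_sub_left (volume : Measure ℝ) 1).restrict_preimage
    (measurableSet_Icc : MeasurableSet (Set.Icc (0:ℝ) 1))
  have hs : (fun t : ℝ => 1 - t) ⁻¹' Set.Icc 0 1 = Set.Icc 0 1 := by
    ext t
    simp only [Set.mem_preimage, Set.mem_Icc]
    constructor
    · rintro ⟨h1, h2⟩; constructor <;> linarith
    · rintro ⟨h1, h2⟩; constructor <;> linarith
  rwa [hs] at h

instance cubeMeasure_prob (d : ℕ) : IsProbabilityMeasure (cubeMeasure d) := by
  have : IsProbabilityMeasure (volume.restrict (Set.Icc (0:ℝ) 1)) := by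
    constructor
    rw [Measure.restrict_apply_univ]
    simp [Real.volume_Icc]
  rw [cubeMeasure]
  infer_instance

private lemma cubeReflect_measurePreserving (d : ℕ) :
    MeasurePreserving (cubeReflect d) (cubeMeasure d) (cubeMeasure d) := by
  have : IsProbabilityMeasure (volume.restrict (Set.Icc (0:ℝ) 1)) := by
    constructor
    rw [Measure.restrict_apply_univ]
    simp [Real.volume_Icc]
  rw [cubeMeasure]
  exact measurePreserving_pi _ _ (fun _ => oneSub_measurePreserving)

set_option maxHeartbeats 1000000 in
theorem statement14 (d : ℕ) (hd : 1 ≤ d)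
    (T Tstar P : Lp ℂ 2 (cubeMeasure d) →L[ℂ] Lp ℂ 2 (cubeMeasure d))
    (hT : ∀ u : Lp ℂ 2 (cubeMeasure d), ∀ᵐ x ∂(cubeMeasure d),
      T u x = ∫ y in Set.Icc 0 x, u y ∂(cubeMeasure d))
    (hTstar : ∀ u : Lp ℂ 2 (cubeMeasure d), ∀ᵐ x ∂(cubeMeasure d),
      Tstar u x = ∫ y in Set.Icc x 1, u y ∂(cubeMeasure d))
    (hP : ∀ u : Lp ℂ 2 (cubeMeasure d), ∀ᵐ x ∂(cubeMeasure d),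
      P u x = ∫ y, u y ∂(cubeMeasure d)) :
    SameNonzeroEigenvalues
      (T ∘L T ∘L (1 - P) ∘L Tstar ∘L Tstar)
      ((1 - P) ∘L T ∘L T ∘L Tstar ∘L Tstar ∘L (1 - P)) ∧
    SameNonzeroEigenvalues
      (Tstar ∘L T ∘L (1 - P) ∘L Tstar ∘L T)
      ((1 - P) ∘L Tstar ∘L T ∘L Tstar ∘L T ∘L (1 - P)) := by
  set r := cubeReflect d with hrdef
  have hr : MeasurePreserving r (cubeMeasure d) (cubeMeasure d) := cubeReflect_measurePreserving d
  have hremb : MeasurableEmbedding r := (cubeReflectEquiv d).measurableEmbedding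
  -- the reflection operator on L²
  set R : Lp ℂ 2 (cubeMeasure d) →L[ℂ] Lp ℂ 2 (cubeMeasure d) :=
    (Lp.compMeasurePreservingₗᵢ (E := ℂ) (p := 2) ℂ r hr).toContinuousLinearMap with hRdef
  have hRcoe : ∀ u : Lp ℂ 2 (cubeMeasure d), (R u : (Fin d → ℝ) → ℂ) =ᵐ[cubeMeasure d] fun x => u (r x) :=
    fun u => Lp.coeFn_compMeasurePreserving u hr
  -- P is idempotent
  have hPP : P * P = P := by
    refine ContinuousLinearMap.ext fun u => Lp.ext ?_
    have hint : ∫ y, (P u : (Fin d → ℝ) → ℂ) y ∂(cubeMeasure d) = ∫ y, u y ∂(cubeMeasure d) := by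
      rw [integral_congr_ae (hP u)]
      simp
    filter_upwards [hP (P u), hP u] with x hx1 hx2
    show P (P u) x = P u x
    rw [hx1, hint, hx2]
  -- R is an involution
  have hRR : R * R = 1 := by
    refine ContinuousLinearMap.ext fun u => Lp.ext ?_
    have h2 := hr.quasiMeasurePreserving.ae_eq (hRcoe u)
    filter_upwards [hRcoe (R u), h2] with x hx1 hx2
    show R (R u) x = u x
    rw [hx1]
    have : ((R u : (Fin d → ℝ) → ℂ) ∘ r) x = ((fun y => u (r y)) ∘ r) x := hx2
    simp only [Function.comp] at this
    rw [this, hrdef, cubeReflect_involutive]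
  -- R intertwines T and Tstar
  have hRT : R * T = Tstar * R := by
    refine ContinuousLinearMap.ext fun u => Lp.ext ?_
    have h2 := hr.quasiMeasurePreserving.ae (hT u)
    have h4 : ∀ x : Fin d → ℝ,
        ∫ y in Set.Icc x 1, u (r y) ∂(cubeMeasure d) = ∫ y in Set.Icc (0 : Fin d → ℝ) (r x), u y ∂(cubeMeasure d) := by
      intro x
      have hset : Set.Icc x 1 = r ⁻¹' (Set.Icc (0 : Fin d → ℝ) (r x)) := by
        ext z
        simp only [Set.mem_preimage, Set.mem_Icc, Pi.le_def, Pi.zero_apply, Pi.one_apply,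
          hrdef, cubeReflect]
        constructor
        · rintro ⟨h1, h2⟩
          exact ⟨fun i => by have := h2 i; linarith, fun i => by have := h1 i; linarith⟩
        · rintro ⟨h1, h2⟩
          exact ⟨fun i => by have := h2 i; linarith, fun i => by have := h1 i; linarith⟩
      rw [hset, hr.setIntegral_preimage_emb hremb (fun y => u y) _]
    have h5 : ∀ x : Fin d → ℝ,
        ∫ y in Set.Icc x 1, (R u : (Fin d → ℝ) → ℂ) y ∂(cubeMeasure d) = ∫ y in Set.Icc x 1, u (r y) ∂(cubeMeasure d) :=
      fun x => integral_congr_ae (ae_restrict_of_ae (hRcoe u))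
    filter_upwards [hRcoe (T u), h2, hTstar (R u)] with x hx1 hx2 hx3
    show R (T u) x = Tstar (R u) x
    rw [hx1, hx2, hx3, h5 x, h4 x]
  -- R commutes with P
  have hRP : R * P = P * R := by
    refine ContinuousLinearMap.ext fun u => Lp.ext ?_
    have h2 := hr.quasiMeasurePreserving.ae (hP u)
    have hint : ∫ y, (R u : (Fin d → ℝ) → ℂ) y ∂(cubeMeasure d) = ∫ y, u y ∂(cubeMeasure d) := by
      rw [integral_congr_ae (hRcoe u)]
      exact hr.integral_comp hremb _
    filter_upwards [hRcoe (P u), h2, hP (R u)] with x hx1 hx2 hx3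
    show R (P u) x = P (R u) x
    rw [hx1, hx2, hx3, hint]
  -- derived algebraic identities
  set Q : Lp ℂ 2 (cubeMeasure d) →L[ℂ] Lp ℂ 2 (cubeMeasure d) := 1 - P with hQdef
  have hQQ : Q * Q = Q := by
    simp only [hQdef, mul_sub, sub_mul, mul_one, one_mul, hPP]
    abel
  have hRQ : R * Q = Q * R := by
    simp only [hQdef, mul_sub, sub_mul, mul_one, one_mul, hRP]
  have hRTR : R * T * R = Tstar := by
    rw [hRT, mul_assoc, hRR, mul_one]
  have hRTs : R * Tstar = T * R := by
    rw [← hRTR]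
    simp only [← mul_assoc]
    rw [hRR, one_mul]
  -- pointful versions for rewriting under associativity
  have hQQ' : ∀ X : Lp ℂ 2 (cubeMeasure d) →L[ℂ] Lp ℂ 2 (cubeMeasure d), Q * (Q * X) = Q * X := fun X => by
    rw [← mul_assoc, hQQ]
  have hRR' : ∀ X : Lp ℂ 2 (cubeMeasure d) →L[ℂ] Lp ℂ 2 (cubeMeasure d), R * (R * X) = X := fun X => by
    rw [← mul_assoc, hRR, one_mul]
  have hRT' : ∀ X : Lp ℂ 2 (cubeMeasure d) →L[ℂ] Lp ℂ 2 (cubeMeasure d), R * (T * X) = Tstar * (R * X) := fun X => by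
    rw [← mul_assoc, hRT, mul_assoc]
  have hRTs' : ∀ X : Lp ℂ 2 (cubeMeasure d) →L[ℂ] Lp ℂ 2 (cubeMeasure d), R * (Tstar * X) = T * (R * X) := fun X => by
    rw [← mul_assoc, hRTs, mul_assoc]
  have hRQ' : ∀ X : Lp ℂ 2 (cubeMeasure d) →L[ℂ] Lp ℂ 2 (cubeMeasure d), R * (Q * X) = Q * (R * X) := fun X => by
    rw [← mul_assoc, hRQ, mul_assoc]
  constructor
  · -- part (i)
    show SameNonzeroEigenvalues
      (T * (T * (Q * (Tstar * Tstar)))) (Q * (T * (T * (Tstar * (Tstar * Q)))))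
    have e1 : T * (T * (Q * (Tstar * Tstar)))
        = (T * (T * Q)) * (Q * (Tstar * Tstar)) := by
      simp only [mul_assoc, hQQ']
    have s1 : SameNonzeroEigenvalues (T * (T * (Q * (Tstar * Tstar))))
        ((Q * (Tstar * Tstar)) * (T * (T * Q))) := by
      rw [e1]; exact sne_mul _ _
    have e2 : R * ((Q * (Tstar * Tstar)) * (T * (T * Q)) * R)
        = Q * (T * (T * (Tstar * (Tstar * Q)))) := by
      simp only [mul_assoc, hRQ', hRT', hRTs', hQQ', hRR', hRR, mul_one]
    have s2 : SameNonzeroEigenvalues (Q * (T * (T * (Tstar * (Tstar * Q)))))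
        ((Q * (Tstar * Tstar)) * (T * (T * Q))) := by
      have h := sne_mul (R * ((Q * (Tstar * Tstar)) * (T * (T * Q)))) R
      rw [mul_assoc, e2, hRR'] at h
      exact h
    exact sne_trans s1 (sne_symm s2)
  · -- part (ii)
    show SameNonzeroEigenvalues
      (Tstar * (T * (Q * (Tstar * T)))) (Q * (Tstar * (T * (Tstar * (T * Q)))))
    have e1 : Tstar * (T * (Q * (Tstar * T)))
        = (Tstar * (T * Q)) * (Q * (Tstar * T)) := by
      simp only [mul_assoc, hQQ']
    have e2 : (Q * (Tstar * T)) * (Tstar * (T * Q))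
        = Q * (Tstar * (T * (Tstar * (T * Q)))) := by
      simp only [mul_assoc]
    have s1 : SameNonzeroEigenvalues (Tstar * (T * (Q * (Tstar * T))))
        ((Q * (Tstar * T)) * (Tstar * (T * Q))) := by
      rw [e1]; exact sne_mul _ _
    rw [← e2]
    exact s1
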